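/- Let D ⊆ ℝ² be open and let q, r, q̄, r̄, φ : D → ℂ be C² functions satisfying the mPLR system. Then on D the functions q and r satisfy the second-order system ∂²q/∂t∂t̄ = 4q + 4qr·(∂q/∂t̄) and ∂²r/∂t∂t̄ = 4r − 4qr·(∂r/∂t̄). -/

import Mathlib

/-- Partial derivative with respect to the first coordinate `t`. -/
noncomputable def pd1 (f : ℝ × ℝ → ℂ) : ℝ × ℝ → ℂ :=
  fun p => fderiv ℝ f p ((1 : ℝ), (0 : ℝ))

/-- Partial derivative with respect to the second coordinate `t̄`. -/
noncomputable def pd2 (f : ℝ × ℝ → ℂ) : ℝ × ℝ → ℂ :=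
  fun p => fderiv ℝ f p ((0 : ℝ), (1 : ℝ))

/-- The modified Pohlmeyer–Lund–Regge system on a set `D ⊆ ℝ²`. -/
def mPLR (D : Set (ℝ × ℝ)) (q r qb rb φ : ℝ × ℝ → ℂ) : Prop :=
  ∀ p ∈ D,
    pd2 q p = -2 * qb p * Complex.exp (2 * φ p) ∧
    pd2 r p = 2 * rb p * Complex.exp (-2 * φ p) ∧
    pd1 φ p = 2 * q p * r p ∧
    pd2 φ p = -2 * qb p * rb p ∧
    pd1 qb p = -2 * q p * Complex.exp (-2 * φ p) ∧
    pd1 rb p = 2 * r p * Complex.exp (2 * φ p)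

lemma pd_mul_exp (c : ℂ) (f g : ℝ × ℝ → ℂ) (p : ℝ × ℝ)
    (hf : DifferentiableAt ℝ f p) (hg : DifferentiableAt ℝ g p) (v : ℝ × ℝ) :
    fderiv ℝ (fun x => c * f x * Complex.exp (g x)) p v
      = c * (fderiv ℝ f p v) * Complex.exp (g p)
        + c * f p * (fderiv ℝ g p v) * Complex.exp (g p) := by
  have e1 : HasFDerivAt Complex.exp
      ((ContinuousLinearMap.smulRight (1 : ℂ →L[ℂ] ℂ) (Complex.exp (g p))).restrictScalars ℝ)
      (g p) := ((Complex.hasDerivAt_exp (g p)).hasFDerivAt).restrictScalars ℝ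
  have hexp := e1.comp p hg.hasFDerivAt
  have H := (hf.hasFDerivAt.const_mul c).mul hexp
  simp only [Function.comp_def, Pi.mul_def] at H
  rw [H.fderiv]
  simp [Function.comp, smul_eq_mul]
  ring

theorem mPLR_second_order_q_r
    (D : Set (ℝ × ℝ)) (hD : IsOpen D) (q r qb rb φ : ℝ × ℝ → ℂ)
    (hq : ContDiffOn ℝ 2 q D) (hr : ContDiffOn ℝ 2 r D)
    (hqb : ContDiffOn ℝ 2 qb D) (hrb : ContDiffOn ℝ 2 rb D)
    (hφ : ContDiffOn ℝ 2 φ D)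
    (h : mPLR D q r qb rb φ) :
    ∀ p ∈ D,
      pd1 (pd2 q) p = 4 * q p + 4 * q p * r p * pd2 q p ∧
      pd1 (pd2 r) p = 4 * r p - 4 * q p * r p * pd2 r p := by
  intro p hp
  have hmem : D ∈ nhds p := hD.mem_nhds hp
  have hqbd : DifferentiableAt ℝ qb p :=
    (hqb.contDiffAt hmem).differentiableAt (by norm_num)
  have hrbd : DifferentiableAt ℝ rb p :=
    (hrb.contDiffAt hmem).differentiableAt (by norm_num)
  have hφd : DifferentiableAt ℝ φ p :=
    (hφ.contDiffAt hmem).differentiableAt (by norm_num)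
  have hφ2 : DifferentiableAt ℝ (fun x => (2 : ℂ) * φ x) p := hφd.const_mul 2
  have hφn2 : DifferentiableAt ℝ (fun x => (-2 : ℂ) * φ x) p := hφd.const_mul (-2)
  obtain ⟨h1, h2, h3, h4, h5, h6⟩ := h p hp
  have hone : Complex.exp (-2 * φ p) * Complex.exp (2 * φ p) = 1 := by
    rw [← Complex.exp_add]; ring_nf; exact Complex.exp_zero
  have hd2φ : ∀ v, fderiv ℝ (fun x => (2 : ℂ) * φ x) p v = 2 * fderiv ℝ φ p v := by
    intro v
    rw [(hφd.hasFDerivAt.const_mul (2 : ℂ)).fderiv]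
    simp
  have hdn2φ : ∀ v, fderiv ℝ (fun x => (-2 : ℂ) * φ x) p v = -2 * fderiv ℝ φ p v := by
    intro v
    rw [(hφd.hasFDerivAt.const_mul (-2 : ℂ)).fderiv]
    simp
  constructor
  · have heq : pd2 q =ᶠ[nhds p] fun x => -2 * qb x * Complex.exp (2 * φ x) :=
      Filter.eventuallyEq_of_mem hmem (fun x hx => (h x hx).1)
    have : pd1 (pd2 q) p
        = fderiv ℝ (fun x => -2 * qb x * Complex.exp ((fun y => (2:ℂ) * φ y) x)) p ((1:ℝ),(0:ℝ)) := by
      simp only [pd1]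
      rw [heq.fderiv_eq]
    rw [this, pd_mul_exp (-2) qb (fun y => (2:ℂ) * φ y) p hqbd hφ2, hd2φ]
    have h5' : fderiv ℝ qb p ((1:ℝ),(0:ℝ)) = -2 * q p * Complex.exp (-2 * φ p) := h5
    have h3' : fderiv ℝ φ p ((1:ℝ),(0:ℝ)) = 2 * q p * r p := h3
    rw [h5', h3', h1]
    linear_combination (4 * q p) * hone
  · have heq : pd2 r =ᶠ[nhds p] fun x => 2 * rb x * Complex.exp (-2 * φ x) :=
      Filter.eventuallyEq_of_mem hmem (fun x hx => (h x hx).2.1)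
    have : pd1 (pd2 r) p
        = fderiv ℝ (fun x => 2 * rb x * Complex.exp ((fun y => (-2:ℂ) * φ y) x)) p ((1:ℝ),(0:ℝ)) := by
      simp only [pd1]
      rw [heq.fderiv_eq]
    rw [this, pd_mul_exp 2 rb (fun y => (-2:ℂ) * φ y) p hrbd hφn2, hdn2φ]
    have h6' : fderiv ℝ rb p ((1:ℝ),(0:ℝ)) = 2 * r p * Complex.exp (2 * φ p) := h6
    have h3' : fderiv ℝ φ p ((1:ℝ),(0:ℝ)) = 2 * q p * r p := h3
    rw [h6', h3', h2]
    linear_combination (4 * r p) * hone
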